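/- Let G : ℝ^d → (convex compact subsets of ℝ^d) be l-Lipschitz w.r.t. the sup-norm Hausdorff distance with l < 1. Then for every ξ ∈ ℝ^d, the set (id + G)⁻¹(ξ) := {x ∈ ℝ^d : ξ ∈ x + G(x)} is path-connected: for any z, z̃ in this set there is a continuous map φ : [0,1] → ℝ^d with φ(0) = z, φ(1) = z̃ and ξ ∈ φ(λ) + G(φ(λ)) for all λ ∈ [0,1]. -/

import Mathlib

open Metric Set Pointwise Finset

lemma infDist_combo {E : Type*} [NormedAddCommGroup E] [NormedSpace ℝ E] {s : Set E}
    (hs : Convex ℝ s) (hc : IsCompact s) (hn : s.Nonempty) (a b : E) {t : ℝ}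
    (ht0 : 0 ≤ t) (ht1 : t ≤ 1) :
    infDist ((1-t) • a + t • b) s ≤ (1-t) * infDist a s + t * infDist b s := by
  obtain ⟨a', ha's, ha'⟩ := hc.exists_infDist_eq_dist hn a
  obtain ⟨b', hb's, hb'⟩ := hc.exists_infDist_eq_dist hn b
  have hmem : (1-t) • a' + t • b' ∈ s := hs ha's hb's (by linarith) ht0 (by ring)
  calc infDist ((1-t) • a + t • b) s ≤ dist ((1-t) • a + t • b) ((1-t) • a' + t • b') :=
        infDist_le_dist_of_mem hmem
    _ ≤ dist ((1-t) • a) ((1-t) • a') + dist (t • b) (t • b') := dist_add_add_le _ _ _ _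
    _ = (1-t) * dist a a' + t * dist b b' := by
        rw [dist_smul₀, dist_smul₀, Real.norm_of_nonneg (by linarith), Real.norm_of_nonneg ht0]
    _ = (1-t) * infDist a s + t * infDist b s := by rw [ha', hb']

lemma step_lemma {E : Type*} [NormedAddCommGroup E] [NormedSpace ℝ E]
    (S : E → Set E) (hne : ∀ x, (S x).Nonempty) (hcv : ∀ x, Convex ℝ (S x))
    (hcp : ∀ x, IsCompact (S x))
    {l : ℝ} (hl0 : 0 < l) (hlip : ∀ x y, hausdorffDist (S x) (S y) ≤ l * dist x y)
    {z zt : E} (hz : z ∈ S z) (hzt : zt ∈ S zt)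
    {ε δ : ℝ} (hδ : 0 < δ)
    {φ : ℝ → E} (hφ : ContinuousOn φ (Icc 0 1)) (h0 : φ 0 = z) (h1 : φ 1 = zt)
    (happ : ∀ t ∈ Icc (0:ℝ) 1, infDist (φ t) (S (φ t)) ≤ ε) :
    ∃ ψ : ℝ → E, Continuous ψ ∧ ψ 0 = z ∧ ψ 1 = zt ∧
      (∀ t ∈ Icc (0:ℝ) 1, dist (ψ t) (φ t) ≤ ε + δ) ∧
      (∀ t ∈ Icc (0:ℝ) 1, infDist (ψ t) (S (ψ t)) ≤ l * (ε + 2*δ)) := by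
  have hε : 0 ≤ ε := le_trans infDist_nonneg (happ 0 ⟨le_refl 0, zero_le_one⟩)
  have hTop : ∀ x y, EMetric.hausdorffEdist (S x) (S y) ≠ ⊤ := fun x y =>
    hausdorffEdist_ne_top_of_nonempty_of_bounded (hne x) (hne y)
      (hcp x).isBounded (hcp y).isBounded
  -- uniform continuity
  obtain ⟨η, hη0, hη⟩ := Metric.uniformContinuousOn_iff.mp
    (isCompact_Icc.uniformContinuousOn_of_continuous hφ) δ hδ
  obtain ⟨n₀, hn₀⟩ := exists_nat_one_div_lt hη0
  set N : ℕ := n₀ + 1 with hNdef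
  have hN0 : 0 < N := Nat.succ_pos _
  have hN0' : (0:ℝ) < N := by exact_mod_cast hN0
  have hNη : 1 / (N:ℝ) < η := by exact_mod_cast hn₀
  -- nearest point selections
  have hysel : ∀ i : ℕ, ∃ p ∈ S (φ ((i:ℝ)/N)), infDist (φ ((i:ℝ)/N)) (S (φ ((i:ℝ)/N))) = dist (φ ((i:ℝ)/N)) p :=
    fun i => (hcp _).exists_infDist_eq_dist (hne _) _
  choose y hymem hydist using hysel
  have hmemIcc : ∀ i : ℕ, i ≤ N → (i:ℝ)/N ∈ Icc (0:ℝ) 1 := by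
    intro i hi
    constructor
    · positivity
    · rw [div_le_one hN0']; exact_mod_cast hi
  have hydist' : ∀ i : ℕ, i ≤ N → dist (y i) (φ ((i:ℝ)/N)) ≤ ε := by
    intro i hi
    rw [dist_comm, ← hydist i]
    exact happ _ (hmemIcc i hi)
  have hy0 : y 0 = z := by
    have h00 : ((0:ℕ):ℝ)/N = 0 := by simp
    have : dist (φ ((0:ℕ)/N : ℝ)) (y 0) = 0 := by
      refine le_antisymm ?_ dist_nonneg
      rw [← hydist 0]
      have : φ (((0:ℕ):ℝ)/N) ∈ S (φ (((0:ℕ):ℝ)/N)) := by rw [h00, h0]; exact hz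
      exact le_trans (infDist_le_dist_of_mem this) (by simp)
    have := dist_eq_zero.mp this
    rw [h00, h0] at this; exact this.symm
  have hyN : y N = zt := by
    have hNN : ((N:ℕ):ℝ)/N = 1 := div_self (ne_of_gt hN0')
    have : dist (φ (((N:ℕ):ℝ)/N)) (y N) = 0 := by
      refine le_antisymm ?_ dist_nonneg
      rw [← hydist N]
      have : φ (((N:ℕ):ℝ)/N) ∈ S (φ (((N:ℕ):ℝ)/N)) := by rw [hNN, h1]; exact hzt
      exact le_trans (infDist_le_dist_of_mem this) (by simp)
    have := dist_eq_zero.mp this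
    rw [hNN, h1] at this; exact this.symm
  -- the clamp function
  set c : ℝ → ℝ := fun r => min (max r 0) 1 with hcdef
  have hc_cont : Continuous c := (continuous_id.max continuous_const).min continuous_const
  have hc0 : ∀ r : ℝ, r ≤ 0 → c r = 0 := by
    intro r hr; simp [hcdef, max_eq_right hr]
  have hc1 : ∀ r : ℝ, 1 ≤ r → c r = 1 := by
    intro r hr
    simp only [hcdef]
    rw [max_eq_left (le_trans zero_le_one hr), min_eq_right hr]
  have hcmem : ∀ r : ℝ, 0 ≤ c r ∧ c r ≤ 1 := by
    intro r; exact ⟨le_min (le_max_right _ _) zero_le_one, min_le_right _ _⟩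
  -- the new path
  set ψ : ℝ → E := fun t => y 0 + ∑ i ∈ range N, c ((N:ℝ)*t - i) • (y (i+1) - y i) with hψdef
  have hψc : Continuous ψ := by
    apply continuous_const.add
    apply continuous_finset_sum
    intro i _
    exact ((hc_cont.comp (by continuity)).smul continuous_const)
  have hψ0 : ψ 0 = z := by
    have : ∀ i ∈ range N, c ((N:ℝ)*0 - i) • (y (i+1) - y i) = 0 := by
      intro i _
      rw [hc0 _ (by simp), zero_smul]
    rw [hψdef]
    simp only
    rw [Finset.sum_eq_zero this, add_zero, hy0]
  have hψ1 : ψ 1 = zt := by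
    have : ∀ i ∈ range N, c ((N:ℝ)*1 - i) • (y (i+1) - y i) = y (i+1) - y i := by
      intro i hi
      rw [hc1 _ (by
        rw [Finset.mem_range] at hi
        have : (i:ℝ) + 1 ≤ N := by exact_mod_cast hi
        linarith), one_smul]
    rw [hψdef]
    simp only
    rw [Finset.sum_congr rfl this, Finset.sum_range_sub, hyN]
    abel
  -- structural decomposition
  have key : ∀ t ∈ Icc (0:ℝ) 1, ∃ i : ℕ, i < N ∧ (i:ℝ) ≤ N*t ∧ N*t ≤ (i:ℝ)+1 ∧
      ψ t = (1 - c ((N:ℝ)*t - i)) • y i + c ((N:ℝ)*t - i) • y (i+1) := by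
    intro t ht
    have hNt0 : 0 ≤ (N:ℝ)*t := mul_nonneg (le_of_lt hN0') ht.1
    set i : ℕ := min ⌊(N:ℝ)*t⌋₊ (N-1) with hidef
    have hiN : i < N := lt_of_le_of_lt (min_le_right _ _) (Nat.sub_lt hN0 one_pos)
    have hile : (i:ℝ) ≤ (N:ℝ)*t := le_trans (by exact_mod_cast min_le_left _ _)
      (Nat.floor_le hNt0)
    have hige : (N:ℝ)*t ≤ (i:ℝ) + 1 := by
      rcases le_or_gt ⌊(N:ℝ)*t⌋₊ (N-1) with h | h
      · rw [hidef, min_eq_left h]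
        exact le_of_lt (Nat.lt_floor_add_one _)
      · rw [hidef, min_eq_right (le_of_lt h)]
        have : ((N:ℝ)-1) + 1 = N := by ring
        have hcast : ((N-1 : ℕ):ℝ) = (N:ℝ) - 1 := by
          have : (1:ℕ) ≤ N := hN0
          push_cast [Nat.cast_sub this]
          ring
        rw [hcast, this]
        calc (N:ℝ)*t ≤ N*1 := by
              apply mul_le_mul_of_nonneg_left ht.2 (le_of_lt hN0')
          _ = N := mul_one _
    refine ⟨i, hiN, hile, hige, ?_⟩
    -- compute ψ t
    have hzero : ∀ j ∈ range N, j ∉ range (i+1) → c ((N:ℝ)*t - j) • (y (j+1) - y j) = 0 := by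
      intro j _ hj
      rw [Finset.mem_range, not_lt] at hj
      have : (N:ℝ)*t - j ≤ 0 := by
        have : (i:ℝ) + 1 ≤ (j:ℝ) := by exact_mod_cast hj
        linarith
      rw [hc0 _ this, zero_smul]
    have hone : ∀ j ∈ range i, c ((N:ℝ)*t - j) • (y (j+1) - y j) = y (j+1) - y j := by
      intro j hj
      rw [Finset.mem_range] at hj
      have : (1:ℝ) ≤ (N:ℝ)*t - j := by
        have : (j:ℝ) + 1 ≤ (i:ℝ) := by exact_mod_cast hj
        linarith
      rw [hc1 _ this, one_smul]
    have hsub : range (i+1) ⊆ range N := Finset.range_subset_range.mpr hiN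
    have : ψ t = y 0 + ∑ j ∈ range (i+1), c ((N:ℝ)*t - j) • (y (j+1) - y j) := by
      rw [hψdef]; simp only
      rw [Finset.sum_subset hsub hzero]
    rw [this, Finset.sum_range_succ, Finset.sum_congr rfl hone, Finset.sum_range_sub]
    have hexp : (1 - c ((N:ℝ)*t - i)) • y i + c ((N:ℝ)*t - i) • y (i+1)
        = y i + c ((N:ℝ)*t - i) • (y (i+1) - y i) := by
      rw [sub_smul, one_smul, smul_sub]; abel
    rw [hexp]; abel
  -- estimates
  have hclose : ∀ t ∈ Icc (0:ℝ) 1, ∀ i : ℕ, i ≤ N → (N:ℝ)*t - 1 ≤ (i:ℝ) → (i:ℝ) ≤ N*t + 1 →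
      dist (φ ((i:ℝ)/N)) (φ t) ≤ δ := by
    intro t ht i hiN h1' h2'
    apply le_of_lt
    apply hη _ (hmemIcc i hiN) _ ht
    rw [Real.dist_eq]
    have heq : (i:ℝ)/N - t = ((i:ℝ) - N*t)/N := by field_simp
    calc |(i:ℝ)/N - t| = |(i:ℝ) - N*t| / N := by rw [heq, abs_div, abs_of_pos hN0']
      _ ≤ 1 / N := by
          apply div_le_div_of_nonneg_right _ (le_of_lt hN0')
          exact abs_le.mpr ⟨by linarith, by linarith⟩
      _ < η := hNη
  have hgetd : ∀ t ∈ Icc (0:ℝ) 1, ∀ i : ℕ, i < N → (i:ℝ) ≤ N*t → (N:ℝ)*t ≤ (i:ℝ)+1 →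
      dist (φ ((i:ℝ)/N)) (φ t) ≤ δ ∧ dist (φ (((i+1:ℕ):ℝ)/N)) (φ t) ≤ δ := by
    intro t ht i hiN hile hige
    constructor
    · exact hclose t ht i (le_of_lt hiN) (by linarith) (by linarith)
    · have hcc : ((i+1:ℕ):ℝ) = (i:ℝ)+1 := by push_cast; ring
      refine hclose t ht (i+1) hiN ?_ ?_ <;> rw [hcc] <;> linarith
  have hdist : ∀ t ∈ Icc (0:ℝ) 1, dist (ψ t) (φ t) ≤ ε + δ := by
    intro t ht
    obtain ⟨i, hiN, hile, hige, hrep⟩ := key t ht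
    obtain ⟨hd1, hd2⟩ := hgetd t ht i hiN hile hige
    set s := c ((N:ℝ)*t - i) with hs
    have hs0 : 0 ≤ s := (hcmem _).1
    have hs1 : s ≤ 1 := (hcmem _).2
    have hA : dist (y i) (φ t) ≤ ε + δ :=
      (dist_triangle (y i) (φ ((i:ℝ)/N)) (φ t)).trans
        (add_le_add (hydist' i (le_of_lt hiN)) hd1)
    have hB : dist (y (i+1)) (φ t) ≤ ε + δ :=
      (dist_triangle (y (i+1)) (φ (((i+1:ℕ):ℝ)/N)) (φ t)).trans
        (add_le_add (hydist' (i+1) hiN) hd2)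
    calc dist (ψ t) (φ t) = dist ((1-s) • y i + s • y (i+1)) ((1-s) • φ t + s • φ t) := by
          rw [hrep]; congr 1; rw [← add_smul, sub_add_cancel, one_smul]
      _ ≤ dist ((1-s) • y i) ((1-s) • φ t) + dist (s • y (i+1)) (s • φ t) :=
          dist_add_add_le _ _ _ _
      _ = (1-s) * dist (y i) (φ t) + s * dist (y (i+1)) (φ t) := by
          rw [dist_smul₀, dist_smul₀, Real.norm_of_nonneg (by linarith), Real.norm_of_nonneg hs0]
      _ ≤ (1-s) * (ε+δ) + s * (ε+δ) :=
          add_le_add (mul_le_mul_of_nonneg_left hA (by linarith))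
            (mul_le_mul_of_nonneg_left hB hs0)
      _ = ε + δ := by ring
  refine ⟨ψ, hψc, hψ0, hψ1, hdist, ?_⟩
  intro t ht
  obtain ⟨i, hiN, hile, hige, hrep⟩ := key t ht
  obtain ⟨hd1, hd2⟩ := hgetd t ht i hiN hile hige
  set s := c ((N:ℝ)*t - i) with hs
  have hs0 : 0 ≤ s := (hcmem _).1
  have hs1 : s ≤ 1 := (hcmem _).2
  have hinf1 : infDist (y i) (S (φ t)) ≤ l * δ :=
    le_trans (infDist_le_hausdorffDist_of_mem (hymem i) (hTop _ _))
      (le_trans (hlip _ _) (mul_le_mul_of_nonneg_left hd1 (le_of_lt hl0)))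
  have hinf2 : infDist (y (i+1)) (S (φ t)) ≤ l * δ :=
    le_trans (infDist_le_hausdorffDist_of_mem (hymem (i+1)) (hTop _ _))
      (le_trans (hlip _ _) (mul_le_mul_of_nonneg_left hd2 (le_of_lt hl0)))
  have hcombo : infDist (ψ t) (S (φ t)) ≤ l * δ := by
    calc infDist (ψ t) (S (φ t))
        ≤ (1-s) * infDist (y i) (S (φ t)) + s * infDist (y (i+1)) (S (φ t)) := by
          rw [hrep]; exact infDist_combo (hcv _) (hcp _) (hne _) _ _ hs0 hs1
      _ ≤ (1-s) * (l*δ) + s * (l*δ) :=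
          add_le_add (mul_le_mul_of_nonneg_left hinf1 (by linarith))
            (mul_le_mul_of_nonneg_left hinf2 hs0)
      _ = l * δ := by ring
  calc infDist (ψ t) (S (ψ t))
      ≤ infDist (ψ t) (S (φ t)) + hausdorffDist (S (φ t)) (S (ψ t)) :=
        infDist_le_infDist_add_hausdorffDist (hTop _ _)
    _ ≤ l * δ + l * dist (φ t) (ψ t) := add_le_add hcombo (hlip _ _)
    _ ≤ l * δ + l * (ε + δ) := by
        have := hdist t ht
        rw [dist_comm] at this
        have := mul_le_mul_of_nonneg_left this (le_of_lt hl0)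
        linarith
    _ = l * (ε + 2*δ) := by ring

set_option maxHeartbeats 1000000 in
theorem main_aux {E : Type*} [NormedAddCommGroup E] [NormedSpace ℝ E] [CompleteSpace E]
    (S : E → Set E) (hne : ∀ x, (S x).Nonempty) (hcv : ∀ x, Convex ℝ (S x))
    (hcp : ∀ x, IsCompact (S x))
    {l : ℝ} (hl0 : 0 < l) (hl1 : l < 1)
    (hlip : ∀ x y, hausdorffDist (S x) (S y) ≤ l * dist x y)
    (z zt : E) (hz : z ∈ S z) (hzt : zt ∈ S zt) :
    ∃ φ : ℝ → E, ContinuousOn φ (Icc 0 1) ∧ φ 0 = z ∧ φ 1 = zt ∧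
      ∀ t ∈ Icc (0:ℝ) 1, φ t ∈ S (φ t) := by
  have hTop : ∀ x y, EMetric.hausdorffEdist (S x) (S y) ≠ ⊤ := fun x y =>
    hausdorffEdist_ne_top_of_nonempty_of_bounded (hne x) (hne y)
      (hcp x).isBounded (hcp y).isBounded
  have hlne : l ≠ 0 := ne_of_gt hl0
  set ε0 : ℝ := l * dist z zt + 1 with hε0def
  have hε0 : 0 < ε0 := by positivity
  set r : ℝ := (1+l)/2 with hrdef
  have hr0 : 0 < r := by rw [hrdef]; linarith
  have hr1 : r < 1 := by rw [hrdef]; linarith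
  have hr1' : 0 < 1 - r := by linarith
  set ε : ℕ → ℝ := fun n => ε0 * r^n with hεdef
  have hεpos : ∀ n, 0 < ε n := fun n => mul_pos hε0 (pow_pos hr0 n)
  set δf : ℕ → ℝ := fun n => (1-l) * ε n / (4*l) with hδdef
  have hδpos : ∀ n, 0 < δf n := fun n =>
    div_pos (mul_pos (by linarith) (hεpos n)) (by linarith)
  have hrec : ∀ n, l * (ε n + 2 * δf n) = ε (n+1) := by
    intro n
    simp only [hδdef, hεdef]
    field_simp
    ring
  -- initial path
  have hφ₀c : Continuous (fun t : ℝ => z + t • (zt - z)) := by continuity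
  have hφ₀0 : z + (0:ℝ) • (zt - z) = z := by simp
  have hφ₀1 : z + (1:ℝ) • (zt - z) = zt := by simp
  have happ₀ : ∀ t ∈ Icc (0:ℝ) 1, infDist (z + t • (zt - z)) (S (z + t • (zt - z))) ≤ ε 0 := by
    intro t ht
    set w := z + t • (zt - z) with hwdef
    have hrep : w = (1-t) • z + t • zt := by
      rw [hwdef]; module
    have hdz : dist z w ≤ dist z zt := by
      have h : z - w = t • (z - zt) := by rw [hwdef]; module
      rw [dist_eq_norm, h, norm_smul, Real.norm_of_nonneg ht.1, ← dist_eq_norm]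
      nlinarith [dist_nonneg (x := z) (y := zt), ht.2, ht.1]
    have hdzt : dist zt w ≤ dist z zt := by
      have h : zt - w = (1-t) • (zt - z) := by rw [hwdef]; module
      have h2 : dist z zt = ‖zt - z‖ := by rw [dist_eq_norm, norm_sub_rev]
      rw [dist_eq_norm, h, norm_smul,
        Real.norm_of_nonneg (by linarith [ht.2] : (0:ℝ) ≤ 1 - t), h2]
      nlinarith [norm_nonneg (zt - z), ht.1]
    have h1 : infDist z (S w) ≤ l * dist z zt :=
      le_trans (infDist_le_hausdorffDist_of_mem hz (hTop _ _))
        (le_trans (hlip _ _) (mul_le_mul_of_nonneg_left hdz (le_of_lt hl0)))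
    have h2 : infDist zt (S w) ≤ l * dist z zt :=
      le_trans (infDist_le_hausdorffDist_of_mem hzt (hTop _ _))
        (le_trans (hlip _ _) (mul_le_mul_of_nonneg_left hdzt (le_of_lt hl0)))
    have hcombo := infDist_combo (hcv w) (hcp w) (hne w) z zt ht.1 ht.2
    rw [← hrep] at hcombo
    have : (1-t) * infDist z (S w) + t * infDist zt (S w) ≤ l * dist z zt := by
      calc (1-t) * infDist z (S w) + t * infDist zt (S w)
          ≤ (1-t) * (l * dist z zt) + t * (l * dist z zt) :=
            add_le_add (mul_le_mul_of_nonneg_left h1 (by linarith [ht.2]))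
              (mul_le_mul_of_nonneg_left h2 ht.1)
        _ = l * dist z zt := by ring
    have hε00 : ε 0 = ε0 := by simp [hεdef]
    rw [hε00]
    calc infDist w (S w) ≤ l * dist z zt := le_trans hcombo this
      _ ≤ ε0 := by rw [hε0def]; linarith
  -- the recursion predicate
  set P : ℕ → (ℝ → E) → Prop := fun n f =>
    Continuous f ∧ f 0 = z ∧ f 1 = zt ∧
    ∀ t ∈ Icc (0:ℝ) 1, infDist (f t) (S (f t)) ≤ ε n with hPdef
  have hstep : ∀ n (f : ℝ → E), P n f →
      ∃ g : ℝ → E, P (n+1) g ∧ ∀ t ∈ Icc (0:ℝ) 1, dist (g t) (f t) ≤ ε n + δf n := by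
    rintro n f ⟨hfc, hf0, hf1, hfapp⟩
    obtain ⟨g, hgc, hg0, hg1, hgd, hgapp⟩ :=
      step_lemma S hne hcv hcp hl0 hlip hz hzt (hδpos n) hfc.continuousOn hf0 hf1 hfapp
    refine ⟨g, ⟨hgc, hg0, hg1, fun t ht => ?_⟩, hgd⟩
    have := hgapp t ht
    calc infDist (g t) (S (g t)) ≤ l * (ε n + 2 * δf n) := this
      _ = ε (n+1) := hrec n
  choose! F hF1 hF2 using hstep
  set Φ : ℕ → ℝ → E := fun n => Nat.rec (fun t : ℝ => z + t • (zt - z)) (fun k fk => F k fk) n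
    with hΦdef
  have hΦ : ∀ n, P n (Φ n) := by
    intro n
    induction n with
    | zero => exact ⟨hφ₀c, hφ₀0, hφ₀1, happ₀⟩
    | succ k ih => exact hF1 k (Φ k) ih
  have hΦd : ∀ n, ∀ t ∈ Icc (0:ℝ) 1, dist (Φ n t) (Φ (n+1) t) ≤ ε n + δf n := by
    intro n t ht
    rw [dist_comm]
    exact hF2 n (Φ n) (hΦ n) t ht
  -- clamp time
  set π : ℝ → ℝ := fun t => min (max t 0) 1 with hπdef
  have hπc : Continuous π := (continuous_id.max continuous_const).min continuous_const
  have hπIcc : ∀ t, π t ∈ Icc (0:ℝ) 1 :=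
    fun t => ⟨le_min (le_max_right _ _) zero_le_one, min_le_right _ _⟩
  have hπid : ∀ t ∈ Icc (0:ℝ) 1, π t = t := by
    intro t ht
    rw [hπdef]
    simp only
    rw [max_eq_left ht.1, min_eq_left ht.2]
  set C : ℝ := ε0 * (1 + (1-l)/(4*l)) with hCdef
  have hC : ∀ n, ε n + δf n = C * r^n := by
    intro n
    simp only [hεdef, hδdef, hCdef]
    field_simp
  have hC0 : 0 < C := by
    have := hεpos 0
    have := hδpos 0
    have h00 := hC 0
    simp only [pow_zero, mul_one] at h00
    linarith
  set Ψ : ℕ → ℝ → E := fun n t => Φ n (π t) with hΨdef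
  have hΨgeo : ∀ t n, dist (Ψ n t) (Ψ (n+1) t) ≤ C * r^n := by
    intro t n
    rw [← hC n]
    exact hΦd n (π t) (hπIcc t)
  have hcauchy : ∀ t : ℝ, ∃ x, Filter.Tendsto (fun n => Ψ n t) Filter.atTop (nhds x) := by
    intro t
    apply cauchySeq_tendsto_of_complete
    exact cauchySeq_of_le_geometric r C hr1 (hΨgeo t)
  choose φ hφlim using hcauchy
  have hgeo : ∀ t n, dist (Ψ n t) (φ t) ≤ C * r^n / (1-r) := fun t n =>
    dist_le_of_le_geometric_of_tendsto r C hr1 (hΨgeo t) (hφlim t) n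
  have htend0 : Filter.Tendsto (fun n : ℕ => C * r^n / (1-r)) Filter.atTop (nhds 0) := by
    have h1 := (tendsto_pow_atTop_nhds_zero_of_lt_one (le_of_lt hr0) hr1).const_mul C
    rw [mul_zero] at h1
    have h2 := h1.div_const (1-r)
    rw [zero_div] at h2
    exact h2
  have hunif : TendstoUniformlyOn Ψ φ Filter.atTop (Icc 0 1) := by
    rw [Metric.tendstoUniformlyOn_iff]
    intro ε' hε'
    filter_upwards [htend0.eventually (gt_mem_nhds hε')] with n hn t ht
    calc dist (φ t) (Ψ n t) = dist (Ψ n t) (φ t) := dist_comm _ _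
      _ ≤ C * r^n / (1-r) := hgeo t n
      _ < ε' := hn
  have hφc : ContinuousOn φ (Icc 0 1) :=
    hunif.continuousOn (Filter.Eventually.of_forall (f := Filter.atTop) fun n =>
      (((hΦ n).1).comp hπc).continuousOn).frequently
  have hπ0 : π 0 = 0 := hπid 0 ⟨le_refl 0, zero_le_one⟩
  have hπ1 : π 1 = 1 := hπid 1 ⟨zero_le_one, le_refl 1⟩
  have hφ0 : φ 0 = z := by
    have hconst : (fun n => Ψ n 0) = fun _ : ℕ => z := by
      funext n
      simp only [hΨdef]
      rw [hπ0, (hΦ n).2.1]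
    have := hφlim 0
    rw [hconst] at this
    exact tendsto_nhds_unique this tendsto_const_nhds
  have hφ1 : φ 1 = zt := by
    have hconst : (fun n => Ψ n 1) = fun _ : ℕ => zt := by
      funext n
      simp only [hΨdef]
      rw [hπ1, (hΦ n).2.2.1]
    have := hφlim 1
    rw [hconst] at this
    exact tendsto_nhds_unique this tendsto_const_nhds
  refine ⟨φ, hφc, hφ0, hφ1, ?_⟩
  intro t ht
  have hπt : π t = t := hπid t ht
  set K : ℝ := (1+l) * (C / (1-r)) + ε0 with hKdef
  have hbound : ∀ n, infDist (φ t) (S (φ t)) ≤ K * r^n := by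
    intro n
    have hD : dist (Φ n t) (φ t) ≤ C * r^n / (1-r) := by
      have := hgeo t n
      simp only [hΨdef] at this
      rwa [hπt] at this
    have h1 : infDist (φ t) (S (φ t)) ≤ infDist (Φ n t) (S (φ t)) + dist (φ t) (Φ n t) :=
      infDist_le_infDist_add_dist
    have h2 : infDist (Φ n t) (S (φ t)) ≤
        infDist (Φ n t) (S (Φ n t)) + hausdorffDist (S (Φ n t)) (S (φ t)) :=
      infDist_le_infDist_add_hausdorffDist (hTop _ _)
    have h3 : infDist (Φ n t) (S (Φ n t)) ≤ ε n := (hΦ n).2.2.2 t ht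
    have h4 : hausdorffDist (S (Φ n t)) (S (φ t)) ≤ l * dist (Φ n t) (φ t) := hlip _ _
    have h5 : dist (φ t) (Φ n t) = dist (Φ n t) (φ t) := dist_comm _ _
    have h6 : l * dist (Φ n t) (φ t) ≤ l * (C * r^n / (1-r)) :=
      mul_le_mul_of_nonneg_left hD (le_of_lt hl0)
    have hεn : ε n = ε0 * r^n := rfl
    have hKexp : K * r^n = ε0 * r^n + (1+l) * (C * r^n / (1-r)) := by
      rw [hKdef]
      field_simp
      ring
    calc infDist (φ t) (S (φ t))
        ≤ infDist (Φ n t) (S (φ t)) + dist (φ t) (Φ n t) := h1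
      _ ≤ (ε n + l * (C * r^n / (1-r))) + C * r^n / (1-r) := by
          rw [h5]
          exact add_le_add (h2.trans (add_le_add h3 (h4.trans h6))) hD
      _ = K * r^n := by rw [hεn, hKexp]; ring
  have hK0 : Filter.Tendsto (fun n : ℕ => K * r^n) Filter.atTop (nhds 0) := by
    have h1 := (tendsto_pow_atTop_nhds_zero_of_lt_one (le_of_lt hr0) hr1).const_mul K
    rwa [mul_zero] at h1
  have hzero : infDist (φ t) (S (φ t)) = 0 :=
    le_antisymm (ge_of_tendsto' hK0 hbound) infDist_nonneg
  exact ((hcp _).isClosed.mem_iff_infDist_zero (hne _)).mpr hzero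

theorem stmt3 {d : ℕ} (G : (Fin d → ℝ) → Set (Fin d → ℝ))
    (hne : ∀ x, (G x).Nonempty) (hcv : ∀ x, Convex ℝ (G x))
    (hcp : ∀ x, IsCompact (G x))
    (l : ℝ) (hl : l < 1)
    (hlip : ∀ x y, hausdorffDist (G x) (G y) ≤ l * dist x y)
    (ξ : Fin d → ℝ) (z ztilde : Fin d → ℝ)
    (hz : ξ ∈ {z} + G z) (hztilde : ξ ∈ {ztilde} + G ztilde) :
    ∃ φ : ℝ → (Fin d → ℝ), ContinuousOn φ (Set.Icc 0 1) ∧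
      φ 0 = z ∧ φ 1 = ztilde ∧
      ∀ t ∈ Set.Icc (0:ℝ) 1, ξ ∈ {φ t} + G (φ t) := by
  set l' : ℝ := max l (1/2) with hl'def
  have hl'0 : 0 < l' := lt_of_lt_of_le (by norm_num) (le_max_right _ _)
  have hl'1 : l' < 1 := max_lt hl (by norm_num)
  set S : (Fin d → ℝ) → Set (Fin d → ℝ) := fun x => {ξ} - G x with hSdef
  have hSim : ∀ x, S x = (fun p => ξ - p) '' G x := fun x => Set.singleton_sub
  have hmem : ∀ x : Fin d → ℝ, (ξ ∈ {x} + G x ↔ x ∈ S x) := by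
    intro x
    rw [hSim x, Set.singleton_add]
    constructor
    · rintro ⟨g, hg, rfl⟩
      exact ⟨g, hg, by module⟩
    · rintro ⟨g, hg, hgx⟩
      exact ⟨g, hg, by rw [← hgx]; module⟩
  have hSne : ∀ x, (S x).Nonempty := fun x => by
    rw [hSim]; exact (hne x).image _
  have hScv : ∀ x, Convex ℝ (S x) := fun x => Convex.sub (convex_singleton ξ) (hcv x)
  have hScp : ∀ x, IsCompact (S x) := fun x => by
    rw [hSim]; exact (hcp x).image (by continuity)
  have hiso : Isometry (fun p : Fin d → ℝ => ξ - p) :=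
    Isometry.of_dist_eq fun a b => dist_sub_left ξ a b
  have hSlip : ∀ x y, hausdorffDist (S x) (S y) ≤ l' * dist x y := by
    intro x y
    rw [hSim x, hSim y, hausdorffDist_image hiso]
    exact (hlip x y).trans (mul_le_mul_of_nonneg_right (le_max_left _ _) dist_nonneg)
  obtain ⟨φ, h1, h2, h3, h4⟩ := main_aux S hSne hScv hScp hl'0 hl'1 hSlip z ztilde
    ((hmem z).mp hz) ((hmem ztilde).mp hztilde)
  exact ⟨φ, h1, h2, h3, fun t ht => (hmem _).mpr (h4 t ht)⟩
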